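/- For every even integer n ≥ 10, there exists a graph G on n vertices that is 2-connected, claw-heavy, almost distance-hereditary, and Hamiltonian, but is not 2-heavy. Concretely: let K_{n/2} + K_{n/2−3} be the join of complete graphs on n/2 and n/2−3 vertices, fix y in the K_{n/2} part, and add three new vertices v, u, x with edges uv, uy, ux and all edges from v and from x to every vertex of the K_{n/2−3} part; this graph G satisfies the hypotheses of the claw-heavy Hamiltonicity theorem but not the 2-heavy one. -/

import Mathlib

open SimpleGraph

/-- A vertex is heavy if its degree is at least half the number of vertices. -/
def Heavy {V : Type*} [Fintype V] (G : SimpleGraph V) (v : V) : Prop :=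
  Fintype.card V ≤ 2 * (G.neighborSet v).ncard

/-- `{x,y} ∈ Ẽ(G)`: distinct vertices that are adjacent or have degree sum at least `n`. -/
def TEdge {V : Type*} [Fintype V] (G : SimpleGraph V) (x y : V) : Prop :=
  x ≠ y ∧ (G.Adj x y ∨
    Fintype.card V ≤ (G.neighborSet x).ncard + (G.neighborSet y).ncard)

/-- `a` is the center and `b,c,d` the end vertices of an induced claw `K_{1,3}`. -/
def IsClaw {V : Type*} (G : SimpleGraph V) (a b c d : V) : Prop :=
  G.Adj a b ∧ G.Adj a c ∧ G.Adj a d ∧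
    ¬ G.Adj b c ∧ ¬ G.Adj b d ∧ ¬ G.Adj c d ∧ b ≠ c ∧ b ≠ d ∧ c ≠ d

/-- Every claw has at least one heavy end vertex. -/
def OneHeavy {V : Type*} [Fintype V] (G : SimpleGraph V) : Prop :=
  ∀ a b c d, IsClaw G a b c d → Heavy G b ∨ Heavy G c ∨ Heavy G d

/-- Every claw has at least two heavy end vertices. -/
def TwoHeavy {V : Type*} [Fintype V] (G : SimpleGraph V) : Prop :=
  ∀ a b c d, IsClaw G a b c d →
    (Heavy G b ∧ Heavy G c) ∨ (Heavy G b ∧ Heavy G d) ∨ (Heavy G c ∧ Heavy G d)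

/-- Every claw has two end vertices with degree sum at least `n`. -/
def ClawHeavy {V : Type*} [Fintype V] (G : SimpleGraph V) : Prop :=
  ∀ a b c d, IsClaw G a b c d →
    Fintype.card V ≤ (G.neighborSet b).ncard + (G.neighborSet c).ncard ∨
    Fintype.card V ≤ (G.neighborSet b).ncard + (G.neighborSet d).ncard ∨
    Fintype.card V ≤ (G.neighborSet c).ncard + (G.neighborSet d).ncard

/-- `G` contains no induced claw. -/
def ClawFree {V : Type*} (G : SimpleGraph V) : Prop :=
  ∀ a b c d, ¬ IsClaw G a b c d

/-- Almost distance-hereditary: in every connected induced subgraph the distance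
between two vertices exceeds their distance in `G` by at most one. -/
def AlmostDH {V : Type*} (G : SimpleGraph V) : Prop :=
  ∀ s : Set V, (G.induce s).Connected →
    ∀ x y : s, (G.induce s).dist x y ≤ G.dist (x : V) (y : V) + 1

/-- Distance-hereditary: every connected induced subgraph preserves distances. -/
def DistHered {V : Type*} (G : SimpleGraph V) : Prop :=
  ∀ s : Set V, (G.induce s).Connected →
    ∀ x y : s, (G.induce s).dist x y = G.dist (x : V) (y : V)

/-- A cycle in `G`, encoded as an injective cyclic sequence of `m ≥ 3` pairwise
adjacent-in-order vertices. -/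
def IsCycleMap {V : Type*} (G : SimpleGraph V) (m : ℕ) (f : ZMod m → V) : Prop :=
  3 ≤ m ∧ Function.Injective f ∧ ∀ i, G.Adj (f i) (f (i + 1))

/-- A longest cycle of `G`. -/
def IsLongestCycleMap {V : Type*} (G : SimpleGraph V) (m : ℕ) (f : ZMod m → V) : Prop :=
  IsCycleMap G m f ∧ ∀ (m' : ℕ) (f' : ZMod m' → V), IsCycleMap G m' f' → m' ≤ m

/-- `R` is a connected component of the subgraph of `G` induced on `W`. -/
def IsCompOf {V : Type*} (G : SimpleGraph V) (W R : Set V) : Prop :=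
  R.Nonempty ∧ R ⊆ W ∧ (G.induce R).Connected ∧
    ∀ x ∈ R, ∀ y ∈ W, G.Adj x y → y ∈ R

namespace ClawHeavyEx2

def Lg (i : ℕ) : Prop := i = 1 ∨ i = 3
def Sg (i : ℕ) : Prop := i = 0 ∨ i = 2 ∨ i = 4

instance : DecidablePred Lg := fun i => by unfold Lg; infer_instance
instance : DecidablePred Sg := fun i => by unfold Sg; infer_instance

def myG (n : ℕ) : SimpleGraph (Fin n) where
  Adj x y := x.val ≠ y.val ∧
    ((¬Lg x.val ∧ ¬Lg y.val) ∨ (Lg x.val ∧ Sg y.val) ∨ (Lg y.val ∧ Sg x.val))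
  symm := by constructor; intro x y ⟨h1, h2⟩; exact ⟨h1.symm, by tauto⟩
  loopless := by constructor; intro x ⟨h1, _⟩; exact h1 rfl

lemma adj_iff {n : ℕ} {x y : Fin n} : (myG n).Adj x y ↔ x.val ≠ y.val ∧
    ((¬Lg x.val ∧ ¬Lg y.val) ∨ (Lg x.val ∧ Sg y.val) ∨ (Lg y.val ∧ Sg x.val)) := Iff.rfl

lemma deg_light {n : ℕ} (hn : 10 ≤ n) (v : Fin n) (hv : Lg v.val) :
    ((myG n).neighborSet v).ncard = 3 := by
  have h0 : (0:ℕ) < n := by omega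
  have h2 : (2:ℕ) < n := by omega
  have h4 : (4:ℕ) < n := by omega
  have hset : (myG n).neighborSet v = {(⟨0, h0⟩ : Fin n), ⟨2, h2⟩, ⟨4, h4⟩} := by
    ext y
    simp only [mem_neighborSet, adj_iff, Set.mem_insert_iff, Set.mem_singleton_iff, Fin.ext_iff]
    unfold Lg Sg at *
    omega
  rw [hset]
  rw [Set.ncard_insert_of_notMem (by simp [Fin.ext_iff]) (Set.toFinite _),
    Set.ncard_insert_of_notMem (by simp [Fin.ext_iff]) (Set.toFinite _), Set.ncard_singleton]

lemma deg_big {n : ℕ} (hn : 10 ≤ n) (v : Fin n) (hv : ¬Lg v.val) (hv' : ¬Sg v.val) :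
    ((myG n).neighborSet v).ncard = n - 3 := by
  classical
  have hset : (myG n).neighborSet v =
      ↑((Finset.univ.filter (fun y : Fin n => ¬Lg y.val)).erase v) := by
    ext y
    simp only [mem_neighborSet, adj_iff, Finset.coe_erase, Set.mem_diff,
      Finset.coe_filter, Set.mem_setOf_eq, Finset.mem_univ, true_and,
      Set.mem_singleton_iff, Fin.ext_iff]
    unfold Lg Sg at *
    omega
  rw [hset, Set.ncard_coe_finset, Finset.card_erase_of_mem (by simp [hv])]
  have hfil : (Finset.univ.filter (fun y : Fin n => Lg y.val)) =
      {(⟨1, by omega⟩ : Fin n), ⟨3, by omega⟩} := by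
    ext y
    simp only [Finset.mem_filter, Finset.mem_univ, true_and, Finset.mem_insert,
      Finset.mem_singleton, Fin.ext_iff]
    unfold Lg; omega
  have := Finset.card_filter_add_card_filter_not (s := (Finset.univ : Finset (Fin n)))
    (fun y : Fin n => Lg y.val)
  rw [hfil] at this
  have h2 : ({(⟨1, by omega⟩ : Fin n), ⟨3, by omega⟩} : Finset (Fin n)).card = 2 := by
    rw [Finset.card_insert_of_notMem (by simp [Fin.ext_iff]), Finset.card_singleton]
  rw [h2, Finset.card_univ, Fintype.card_fin] at this
  omega

set_option maxHeartbeats 1000000 in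
lemma claw_ends {n : ℕ} {b c d : Fin n} (hbc : ¬(myG n).Adj b c) (hbd : ¬(myG n).Adj b d)
    (hcd : ¬(myG n).Adj c d) (h1 : b ≠ c) (h2 : b ≠ d) (h3 : c ≠ d) :
    (Lg b.val ∧ Lg c.val ∧ ¬Lg d.val ∧ ¬Sg d.val) ∨
    (Lg b.val ∧ Lg d.val ∧ ¬Lg c.val ∧ ¬Sg c.val) ∨
    (Lg c.val ∧ Lg d.val ∧ ¬Lg b.val ∧ ¬Sg b.val) := by
  rw [adj_iff] at hbc hbd hcd
  rw [ne_eq, Fin.ext_iff] at h1 h2 h3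
  unfold Lg Sg at *
  omega

lemma clawHeavy {n : ℕ} (hn : 10 ≤ n) : ClawHeavy (myG n) := by
  intro a b c d ⟨hab, hac, had, hbc, hbd, hcd, h1, h2, h3⟩
  rcases claw_ends hbc hbd hcd h1 h2 h3 with ⟨x1, x2, x3, x4⟩ | ⟨x1, x2, x3, x4⟩ | ⟨x1, x2, x3, x4⟩
  · right; left
    rw [deg_light hn b x1, deg_big hn d x3 x4, Fintype.card_fin]; omega
  · left
    rw [deg_light hn b x1, deg_big hn c x3 x4, Fintype.card_fin]; omega
  · left
    rw [deg_light hn c x1, deg_big hn b x3 x4, Fintype.card_fin]; omega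

lemma not_twoHeavy {n : ℕ} (hn : 10 ≤ n) : ¬ TwoHeavy (myG n) := by
  intro h
  have hclaw : IsClaw (myG n) ⟨0, by omega⟩ ⟨1, by omega⟩ ⟨3, by omega⟩ ⟨5, by omega⟩ := by
    refine ⟨?_, ?_, ?_, ?_, ?_, ?_, ?_, ?_, ?_⟩ <;>
      simp [adj_iff, Fin.ext_iff, Lg, Sg]
  have h1 : ¬ Heavy (myG n) (⟨1, by omega⟩ : Fin n) := by
    unfold Heavy
    rw [deg_light hn _ (Or.inl rfl), Fintype.card_fin]; omega
  have h3 : ¬ Heavy (myG n) (⟨3, by omega⟩ : Fin n) := by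
    unfold Heavy
    rw [deg_light hn _ (Or.inr rfl), Fintype.card_fin]; omega
  rcases h _ _ _ _ hclaw with ⟨ha, _⟩ | ⟨ha, _⟩ | ⟨ha, _⟩ <;> tauto

lemma adj_to_S {n : ℕ} {x s : Fin n} (h1 : x.val ≠ s.val) (h2 : Sg s.val) :
    (myG n).Adj x s := by
  rw [adj_iff]; unfold Lg Sg at *; omega

lemma induce_conn {n : ℕ} (hn : 10 ≤ n) (v : Fin n) :
    ((myG n).induce {v}ᶜ).Connected := by
  obtain ⟨s, hsv, hsS⟩ : ∃ s : Fin n, s.val ≠ v.val ∧ Sg s.val := by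
    by_cases h : v.val = 0
    · exact ⟨⟨2, by omega⟩, by simp [h], Or.inr (Or.inl rfl)⟩
    · exact ⟨⟨0, by omega⟩, by simpa using Ne.symm h, Or.inl rfl⟩
  have hsmem : s ∈ ({v}ᶜ : Set (Fin n)) := by
    simp [Fin.ext_iff]; exact hsv
  have key : ∀ x : ({v}ᶜ : Set (Fin n)), ((myG n).induce {v}ᶜ).Reachable x ⟨s, hsmem⟩ := by
    intro x
    by_cases hx : (x : Fin n) = s
    · exact ⟨Walk.nil.copy (Subtype.ext hx.symm) rfl⟩
    have hadj : ((myG n).induce {v}ᶜ).Adj x ⟨s, hsmem⟩ :=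
      adj_to_S (fun hh => hx (Fin.ext hh)) hsS
    exact hadj.reachable
  rw [connected_iff]
  exact ⟨fun x y => (key x).trans (key y).symm, ⟨⟨s, hsmem⟩⟩⟩

lemma conn {n : ℕ} (hn : 10 ≤ n) : (myG n).Connected := by
  have h0 : (0:ℕ) < n := by omega
  have key : ∀ x : Fin n, (myG n).Reachable x ⟨0, h0⟩ := by
    intro x
    by_cases hx : x = ⟨0, h0⟩
    · exact hx ▸ Reachable.refl x
    exact (adj_to_S (fun hh => hx (Fin.ext hh)) (Or.inl rfl)).reachable
  rw [connected_iff]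
  exact ⟨fun x y => (key x).trans (key y).symm, ⟨⟨0, h0⟩⟩⟩


lemma induce_adj {V : Type*} {G : SimpleGraph V} {s : Set V} {a b : s} :
    (G.induce s).Adj a b ↔ G.Adj ↑a ↑b := Iff.rfl

lemma getNbr {V : Type*} {G : SimpleGraph V} (h : G.Preconnected) (x y : V) (hxy : x ≠ y) :
    ∃ z : V, G.Adj x z := by
  obtain ⟨w⟩ := h x y
  cases w with
  | nil => exact absurd rfl hxy
  | cons h q => exact ⟨_, h⟩

lemma dist3 {n : ℕ} (hn : 10 ≤ n) {s : Set (Fin n)} (hs : ((myG n).induce s).Connected)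
    (x y : s) (hxy : (x : Fin n) ≠ (y : Fin n)) (hnadj : ¬(myG n).Adj ↑x ↑y)
    (hx : Lg (x : Fin n).val) : ((myG n).induce s).dist x y ≤ 3 := by
  have hxy' : x ≠ y := fun h => hxy (congrArg Subtype.val h)
  obtain ⟨z, hxz⟩ := getNbr hs.preconnected x y hxy'
  have hxzG : (myG n).Adj ↑x ↑z := induce_adj.mp hxz
  have hSz : Sg (z : Fin n).val := by
    have := adj_iff.mp hxzG
    unfold Lg Sg at *; omega
  by_cases hy : Lg (y : Fin n).val
  · obtain ⟨z', hyz'⟩ := getNbr hs.preconnected y x hxy'.symm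
    have hyzG : (myG n).Adj ↑y ↑z' := induce_adj.mp hyz'
    have hSz' : Sg (z' : Fin n).val := by
      have := adj_iff.mp hyzG
      unfold Lg Sg at *; omega
    by_cases hzz' : (z : Fin n) = (z' : Fin n)
    · have hzy : ((myG n).induce s).Adj z y := by
        rw [induce_adj, hzz']
        exact hyzG.symm
      have h2 : ((myG n).induce s).dist x y ≤ 2 := by
        have := dist_le (Walk.cons hxz (Walk.cons hzy Walk.nil)); simpa using this
      omega
    · have hzz'A : ((myG n).induce s).Adj z z' := by
        rw [induce_adj, adj_iff]
        unfold Lg Sg at *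
        omega
      have := dist_le (Walk.cons hxz (Walk.cons hzz'A (Walk.cons hyz'.symm Walk.nil)))
      simpa using this
  · have hzy : ((myG n).induce s).Adj z y := by
      rw [induce_adj, adj_iff]
      have h1 := adj_iff.not.mp hnadj
      have h2 := adj_iff.mp hxzG
      unfold Lg Sg at *
      omega
    have h2 : ((myG n).induce s).dist x y ≤ 2 := by
      have := dist_le (Walk.cons hxz (Walk.cons hzy Walk.nil)); simpa using this
    omega

lemma almostDH {n : ℕ} (hn : 10 ≤ n) : AlmostDH (myG n) := by
  intro s hs x y
  by_cases hxy : (x : Fin n) = (y : Fin n)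
  · have : x = y := Subtype.ext hxy
    subst this
    simp [SimpleGraph.dist_self]
  by_cases hadj : (myG n).Adj ↑x ↑y
  · have h1 : ((myG n).induce s).dist x y ≤ 1 := by
      have := dist_le (Walk.cons (induce_adj.mpr hadj) Walk.nil)
      simpa using this
    omega
  · have hGdist : 2 ≤ (myG n).dist ↑x ↑y := by
      have hr := (conn hn).preconnected ↑x ↑y
      have h1 := hr.pos_dist_of_ne hxy
      have h2 : (myG n).dist ↑x ↑y ≠ 1 := fun h => hadj (dist_eq_one_iff_adj.mp h)
      omega
    suffices hH : ((myG n).induce s).dist x y ≤ 3 by omega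
    by_cases hx : Lg (x : Fin n).val
    · exact dist3 hn hs x y hxy hadj hx
    · have hy : Lg (y : Fin n).val := by
        have := adj_iff.not.mp hadj
        rw [Fin.ext_iff] at hxy
        unfold Lg Sg at *
        omega
      rw [SimpleGraph.dist_comm]
      exact dist3 hn hs y x (Ne.symm hxy) (fun h => hadj h.symm) hy
def fn (n : ℕ) (hn : 0 < n) (j : ℕ) : Fin n := ⟨j % n, Nat.mod_lt _ hn⟩

lemma fn_val {n : ℕ} (hn : 0 < n) {j : ℕ} (h : j < n) : fn n hn j = ⟨j, h⟩ := by
  simp [fn, Fin.ext_iff, Nat.mod_eq_of_lt h]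

lemma adj_succ {n : ℕ} (hn : 10 ≤ n) {i : ℕ} (h : i + 1 < n) :
    (myG n).Adj ⟨i, by omega⟩ ⟨i + 1, h⟩ := by
  rw [adj_iff]; simp only [Fin.val_mk]; unfold Lg Sg; omega

lemma adj_last {n : ℕ} (hn : 10 ≤ n) : (myG n).Adj ⟨n - 1, by omega⟩ ⟨0, by omega⟩ := by
  rw [adj_iff]; simp only [Fin.val_mk]; unfold Lg Sg; omega

lemma adj01 {n : ℕ} (hn : 10 ≤ n) : (myG n).Adj ⟨0, by omega⟩ ⟨1, by omega⟩ := by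
  rw [adj_iff]; simp only [Fin.val_mk]; unfold Lg Sg; omega

def wUp (n : ℕ) (hn : 10 ≤ n) (i : ℕ) (h : i < n) :
    (myG n).Walk ⟨i, h⟩ ⟨n - 1, by omega⟩ :=
  if he : i = n - 1 then
    (Walk.nil : (myG n).Walk ⟨n - 1, by omega⟩ ⟨n - 1, by omega⟩).copy
      (by simp [Fin.ext_iff, he]) rfl
  else
    Walk.cons (adj_succ hn (by omega)) (wUp n hn (i + 1) (by omega))
  termination_by n - i

lemma wUp_support {n : ℕ} (hn : 10 ≤ n) : ∀ (k i : ℕ) (h : i < n), n - i ≤ k →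
    (wUp n hn i h).support = (List.range' i (n - i)).map (fn n (by omega)) := by
  intro k
  induction k with
  | zero => intro i h hk; omega
  | succ k ih =>
    intro i h hk
    rw [wUp]
    split_ifs with he
    · rw [Walk.support_copy, Walk.support_nil]
      have h1 : n - i = 1 := by omega
      rw [h1, List.range'_succ, List.range'_zero]
      simp [fn_val (by omega : 0 < n) h, Fin.ext_iff, he]
      rw [fn_val (by omega : 0 < n) (by omega : n - 1 < n)]
    · rw [Walk.support_cons, ih (i + 1) (by omega) (by omega)]
      have h1 : n - i = (n - (i + 1)) + 1 := by omega
      rw [h1, List.range'_succ, List.map_cons, fn_val (by omega : 0 < n) h]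

lemma wUp_edges {n : ℕ} (hn : 10 ≤ n) : ∀ (k i : ℕ) (h : i < n), n - i ≤ k →
    (wUp n hn i h).edges =
      (List.range' i (n - 1 - i)).map
        (fun j => s(fn n (by omega : 0 < n) j, fn n (by omega : 0 < n) (j + 1))) := by
  intro k
  induction k with
  | zero => intro i h hk; omega
  | succ k ih =>
    intro i h hk
    rw [wUp]
    split_ifs with he
    · rw [Walk.edges_copy, Walk.edges_nil]
      have h1 : n - 1 - i = 0 := by omega
      rw [h1, List.range'_zero, List.map_nil]
    · rw [Walk.edges_cons, ih (i + 1) (by omega) (by omega)]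
      have h1 : n - 1 - i = (n - 1 - (i + 1)) + 1 := by omega
      rw [h1, List.range'_succ, List.map_cons]
      congr 1
      rw [fn_val (by omega : 0 < n) h, fn_val (by omega : 0 < n) (by omega : i + 1 < n)]

def pWalk (n : ℕ) (hn : 10 ≤ n) : (myG n).Walk ⟨1, by omega⟩ ⟨0, by omega⟩ :=
  (wUp n hn 1 (by omega)).append (Walk.cons (adj_last hn) Walk.nil)

lemma pWalk_support {n : ℕ} (hn : 10 ≤ n) :
    (pWalk n hn).support =
      (List.range' 1 (n - 1)).map (fn n (by omega)) ++ [(⟨0, by omega⟩ : Fin n)] := by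
  rw [pWalk, Walk.support_append, wUp_support hn (n - 1) 1 (by omega) (by omega)]
  simp

lemma pWalk_nodup {n : ℕ} (hn : 10 ≤ n) : (pWalk n hn).support.Nodup := by
  rw [pWalk_support hn]
  apply List.Nodup.append
  · apply List.Nodup.map_on
    · intro x hx y hy hxy
      rw [List.mem_range'_1] at hx hy
      have := congrArg Fin.val hxy
      simp only [fn] at this
      rw [Nat.mod_eq_of_lt (by omega), Nat.mod_eq_of_lt (by omega)] at this
      exact this
    · exact List.nodup_range'
  · simp
  · intro a ha hb
    simp only [List.mem_singleton] at hb
    obtain ⟨j, hj, rfl⟩ := List.mem_map.mp ha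
    rw [List.mem_range'_1] at hj
    have := congrArg Fin.val hb
    simp only [fn, Fin.val_mk] at this
    rw [Nat.mod_eq_of_lt (by omega)] at this
    omega

lemma pWalk_edges {n : ℕ} (hn : 10 ≤ n) :
    (pWalk n hn).edges =
      (List.range' 1 (n - 2)).map
        (fun j => s(fn n (by omega : 0 < n) j, fn n (by omega : 0 < n) (j + 1))) ++
      [s((⟨n - 1, by omega⟩ : Fin n), (⟨0, by omega⟩ : Fin n))] := by
  rw [pWalk, Walk.edges_append, wUp_edges hn (n - 1) 1 (by omega) (by omega)]
  have h1 : n - 1 - 1 = n - 2 := by omega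
  rw [h1]
  simp

lemma edge01_not_mem {n : ℕ} (hn : 10 ≤ n) :
    s((⟨0, by omega⟩ : Fin n), (⟨1, by omega⟩ : Fin n)) ∉ (pWalk n hn).edges := by
  rw [pWalk_edges hn]
  intro hmem
  rw [List.mem_append] at hmem
  rcases hmem with hmem | hmem
  · obtain ⟨j, hj, heq⟩ := List.mem_map.mp hmem
    rw [List.mem_range'_1] at hj
    rw [fn_val (by omega : 0 < n) (by omega : j < n),
      fn_val (by omega : 0 < n) (by omega : j + 1 < n), Sym2.eq_iff] at heq
    simp only [Fin.ext_iff, Fin.val_mk] at heq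
    omega
  · rw [List.mem_singleton, Sym2.eq_iff] at hmem
    simp only [Fin.ext_iff, Fin.val_mk] at hmem
    omega

def cWalk (n : ℕ) (hn : 10 ≤ n) : (myG n).Walk ⟨0, by omega⟩ ⟨0, by omega⟩ :=
  Walk.cons (adj01 hn) (pWalk n hn)

lemma hamiltonian {n : ℕ} (hn : 10 ≤ n) : (myG n).IsHamiltonian := by
  intro _
  refine ⟨⟨0, by omega⟩, cWalk n hn, ?_⟩
  rw [Walk.isHamiltonianCycle_iff_isCycle_and_support_count_tail_eq_one]
  constructor
  · rw [cWalk, Walk.cons_isCycle_iff]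
    exact ⟨(Walk.isPath_def _).mpr (pWalk_nodup hn), edge01_not_mem hn⟩
  · intro a
    have htail : (cWalk n hn).support.tail = (pWalk n hn).support := by
      rw [cWalk, Walk.support_cons, List.tail_cons]
    rw [htail]
    apply List.count_eq_one_of_mem (pWalk_nodup hn)
    rw [pWalk_support hn, List.mem_append]
    by_cases ha : a.val = 0
    · right; simp [Fin.ext_iff, ha]
    · left
      rw [List.mem_map]
      refine ⟨a.val, ?_, ?_⟩
      · rw [List.mem_range'_1]
        omega
      · rw [fn_val (by omega : 0 < n) a.isLt]
end ClawHeavyEx2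

/-- For every even `n ≥ 10` there is an `n`-vertex graph which is 2-connected,
claw-heavy, almost distance-hereditary and Hamiltonian, yet not 2-heavy. -/

theorem exists_clawHeavy_not_twoHeavy (n : ℕ) (hn : 10 ≤ n) (he : Even n) :
    ∃ (V : Type) (_ : Fintype V) (_ : DecidableEq V) (G : SimpleGraph V),
      Fintype.card V = n ∧
      (∀ v : V, (G.induce {v}ᶜ).Connected) ∧
      ClawHeavy G ∧ AlmostDH G ∧ G.IsHamiltonian ∧ ¬ TwoHeavy G := by
  refine ⟨Fin n, inferInstance, inferInstance, ClawHeavyEx2.myG n, ?_, ?_, ?_, ?_, ?_, ?_⟩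
  · exact Fintype.card_fin n
  · exact fun v => ClawHeavyEx2.induce_conn hn v
  · exact ClawHeavyEx2.clawHeavy hn
  · exact ClawHeavyEx2.almostDH hn
  · exact ClawHeavyEx2.hamiltonian hn
  · exact ClawHeavyEx2.not_twoHeavy hn
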